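/- Let D ∈ ℕ with D ≥ 1, β ≥ 0, and p ∈ ℕ with p ≥ 1. Let A be the complex Banach space of functions c : ℤ^D → ℂ with ‖c‖_β := Σ_{m ∈ ℤ^D} e^{β|m|₁} |c(m)| < ∞, equipped with the convolution product (a ⋆ b)(m) = Σ_k a(k) b(m−k), and define the involution c̃(m) := conj(c(−m)). Then the map Φ : A → A, Φ(c) = (c ⋆ c̃)^{⋆p} ⋆ c, is Fréchet differentiable as a map between real Banach spaces, and its real derivative at c is the ℝ-linear map w ↦ (p+1) (c ⋆ c̃)^{⋆p} ⋆ w + p (c ⋆ c̃)^{⋆(p−1)} ⋆ c ⋆ c ⋆ w̃, where for p = 1 the factor (c ⋆ c̃)^{⋆0} is the convolution identity (the delta function at 0). -/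

import Mathlib

open scoped BigOperators

noncomputable section

/-- Convolution of functions on a lattice `L`. -/
def conv {L : Type} [AddCommGroup L] (a b : L → ℂ) : L → ℂ :=
  fun m => ∑' k : L, a k * b (m - k)

/-- `p`-fold convolution power (`convPow a 0` is the convolution identity δ₀). -/
def convPow {L : Type} [AddCommGroup L] [DecidableEq L] (a : L → ℂ) : ℕ → (L → ℂ)
  | 0 => fun m => if m = 0 then 1 else 0
  | n + 1 => conv (convPow a n) a

/-- The involution `c̃(m) = conj (c (−m))`. -/
def tilde {L : Type} [AddCommGroup L] (c : L → ℂ) : L → ℂ :=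
  fun m => starRingEnd ℂ (c (-m))

/-- Finiteness of the weighted Wiener norm on `ℤ^D`. -/
def WSummable {D : ℕ} (β : ℝ) (a : (Fin D → ℤ) → ℂ) : Prop :=
  Summable fun m : Fin D → ℤ => Real.exp (β * ∑ i, |(m i : ℝ)|) * ‖a m‖

/-- The weighted Wiener norm `‖a‖_β = Σ_m e^{β|m|₁} |a m|`. -/
def wnorm {D : ℕ} (β : ℝ) (a : (Fin D → ℤ) → ℂ) : ℝ :=
  ∑' m : Fin D → ℤ, Real.exp (β * ∑ i, |(m i : ℝ)|) * ‖a m‖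

namespace Stmt5Aux

variable {D : ℕ} {β : ℝ}

/-- The weight. -/
def W (β : ℝ) (m : Fin D → ℤ) : ℝ := Real.exp (β * ∑ i, |(m i : ℝ)|)

lemma wsummable_iff {a : (Fin D → ℤ) → ℂ} :
    WSummable β a ↔ Summable fun m => W β m * ‖a m‖ := Iff.rfl

lemma wnorm_eq (a : (Fin D → ℤ) → ℂ) : wnorm β a = ∑' m, W β m * ‖a m‖ := rfl

lemma W_pos (m : Fin D → ℤ) : 0 < W β m := Real.exp_pos _

lemma W_one_le (hβ : 0 ≤ β) (m : Fin D → ℤ) : 1 ≤ W β m := by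
  refine Real.one_le_exp ?_
  have : (0:ℝ) ≤ ∑ i, |(m i : ℝ)| := Finset.sum_nonneg fun i _ => abs_nonneg _
  positivity

lemma W_zero : W β (0 : Fin D → ℤ) = 1 := by
  simp [W]

lemma W_neg (m : Fin D → ℤ) : W β (-m) = W β m := by
  simp [W, abs_neg]

lemma W_submul (hβ : 0 ≤ β) (m k : Fin D → ℤ) : W β m ≤ W β k * W β (m - k) := by
  rw [W, W, W, ← Real.exp_add]
  apply Real.exp_le_exp.2
  rw [← mul_add]
  apply mul_le_mul_of_nonneg_left _ hβ
  rw [← Finset.sum_add_distrib]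
  apply Finset.sum_le_sum
  intro i _
  have : (m i : ℝ) = (k i : ℝ) + ((m - k) i : ℝ) := by
    push_cast [Pi.sub_apply]
    ring
  rw [this]
  exact abs_add_le _ _


variable {a b d : (Fin D → ℤ) → ℂ}

lemma ws_def (a : (Fin D → ℤ) → ℂ) :
    WSummable β a = Summable fun m => W β m * ‖a m‖ := rfl

lemma wnorm_nonneg (a : (Fin D → ℤ) → ℂ) : 0 ≤ wnorm β a :=
  tsum_nonneg fun m => mul_nonneg (W_pos m).le (norm_nonneg _)

lemma norm_le_wnorm (hβ : 0 ≤ β) (ha : WSummable β a) (x : Fin D → ℤ) :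
    ‖a x‖ ≤ wnorm β a := by
  have h1 : ‖a x‖ ≤ W β x * ‖a x‖ :=
    le_mul_of_one_le_left (norm_nonneg _) (W_one_le hβ x)
  exact h1.trans (Summable.le_tsum ha x fun m _ => mul_nonneg (W_pos m).le (norm_nonneg _))

lemma summable_norm_of_ws (hβ : 0 ≤ β) (ha : WSummable β a) : Summable fun m => ‖a m‖ := by
  rw [ws_def] at ha
  exact Summable.of_nonneg_of_le (fun m => norm_nonneg _)
    (fun m => le_mul_of_one_le_left (norm_nonneg _) (W_one_le hβ m)) ha

lemma ws_add (ha : WSummable β a) (hb : WSummable β b) : WSummable β (a + b) := by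
  rw [ws_def] at ha hb ⊢
  apply Summable.of_nonneg_of_le (fun m => mul_nonneg (W_pos m).le (norm_nonneg _))
    _ (ha.add hb)
  intro m
  have h2 : (0:ℝ) ≤ W β m := (W_pos m).le
  have := norm_add_le (a m) (b m)
  simpa [mul_add] using mul_le_mul_of_nonneg_left this h2

lemma ws_neg (ha : WSummable β a) : WSummable β (-a) := by
  rw [ws_def] at ha ⊢; simpa using ha

lemma ws_sub (ha : WSummable β a) (hb : WSummable β b) : WSummable β (a - b) := by
  simpa [sub_eq_add_neg] using ws_add ha (ws_neg hb)

lemma ws_zero : WSummable β (0 : (Fin D → ℤ) → ℂ) := by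
  rw [ws_def]; simp [summable_zero]

lemma ws_smul (z : ℂ) (ha : WSummable β a) : WSummable β (z • a) := by
  rw [ws_def] at ha ⊢
  have : (fun m => W β m * ‖(z • a) m‖) = fun m => ‖z‖ * (W β m * ‖a m‖) := by
    funext m; simp [norm_smul]; ring
  rw [this]
  exact ha.mul_left _

lemma ws_one : WSummable β (fun m : Fin D → ℤ => if m = 0 then 1 else 0) := by
  rw [ws_def]
  apply summable_of_ne_finset_zero (s := {(0 : Fin D → ℤ)})
  intro m hm
  simp only [Finset.mem_singleton] at hm
  simp [hm]

lemma wnorm_one :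
    wnorm β (fun m : Fin D → ℤ => if m = 0 then 1 else 0) = 1 := by
  rw [wnorm_eq]
  rw [tsum_eq_single (0 : Fin D → ℤ)]
  · simp [W_zero]
  · intro m hm; simp [hm]

lemma ws_tilde (ha : WSummable β a) : WSummable β (tilde a) := by
  rw [ws_def] at ha ⊢
  rw [← (Equiv.neg (Fin D → ℤ)).summable_iff]
  refine ha.congr fun m => ?_
  simp [tilde, W_neg, Function.comp]

lemma wnorm_tilde (a : (Fin D → ℤ) → ℂ) : wnorm β (tilde a) = wnorm β a := by
  rw [wnorm_eq, wnorm_eq, ← (Equiv.neg (Fin D → ℤ)).tsum_eq fun m => W β m * ‖a m‖]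
  exact tsum_congr fun m => by simp [tilde, W_neg]

lemma tilde_add (a b : (Fin D → ℤ) → ℂ) : tilde (a + b) = tilde a + tilde b := by
  funext m; simp [tilde]

lemma wnorm_add_le (ha : WSummable β a) (hb : WSummable β b) :
    wnorm β (a + b) ≤ wnorm β a + wnorm β b := by
  rw [ws_def] at ha hb
  rw [wnorm_eq, wnorm_eq, wnorm_eq, ← Summable.tsum_add ha hb]
  apply Summable.tsum_le_tsum _ (ws_add ha hb) (ha.add hb)
  intro m
  have h2 : (0:ℝ) ≤ W β m := (W_pos m).le
  have := norm_add_le (a m) (b m)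
  calc W β m * ‖(a + b) m‖ ≤ W β m * (‖a m‖ + ‖b m‖) :=
        mul_le_mul_of_nonneg_left this h2
    _ = W β m * ‖a m‖ + W β m * ‖b m‖ := by ring

lemma wnorm_neg (a : (Fin D → ℤ) → ℂ) : wnorm β (-a) = wnorm β a := by
  simp [wnorm_eq]

lemma wnorm_smul (z : ℂ) (a : (Fin D → ℤ) → ℂ) : wnorm β (z • a) = ‖z‖ * wnorm β a := by
  rw [wnorm_eq, wnorm_eq, ← tsum_mul_left]
  congr 1; funext m; simp [norm_smul]; ring

/-- The shear equivalence `(k, j) ↦ (k, k + j)`. -/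
def shear1 (D : ℕ) : ((Fin D → ℤ) × (Fin D → ℤ)) ≃ ((Fin D → ℤ) × (Fin D → ℤ)) where
  toFun q := (q.1, q.1 + q.2)
  invFun q := (q.1, q.2 - q.1)
  left_inv q := by simp
  right_inv q := by simp

lemma shear_summable (ha' : Summable fun m => W β m * ‖a m‖)
    (hb' : Summable fun m => W β m * ‖b m‖) :
    Summable fun q : (Fin D → ℤ) × (Fin D → ℤ) =>
      (W β q.1 * ‖a q.1‖) * (W β (q.2 - q.1) * ‖b (q.2 - q.1)‖) := by
  have hf : Summable fun q : (Fin D → ℤ) × (Fin D → ℤ) =>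
      (W β q.1 * ‖a q.1‖) * (W β q.2 * ‖b q.2‖) :=
    Summable.mul_of_nonneg (f := fun m => W β m * ‖a m‖)
      (g := fun m => W β m * ‖b m‖) ha' hb'
      (fun m => mul_nonneg (W_pos m).le (norm_nonneg _))
      (fun m => mul_nonneg (W_pos m).le (norm_nonneg _))
  have hcomp : Summable ((fun q : (Fin D → ℤ) × (Fin D → ℤ) =>
      (W β q.1 * ‖a q.1‖) * (W β (q.2 - q.1) * ‖b (q.2 - q.1)‖)) ∘ (shear1 D)) := by
    have heq : ((fun q : (Fin D → ℤ) × (Fin D → ℤ) =>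
        (W β q.1 * ‖a q.1‖) * (W β (q.2 - q.1) * ‖b (q.2 - q.1)‖)) ∘ (shear1 D))
        = fun q : (Fin D → ℤ) × (Fin D → ℤ) =>
        (W β q.1 * ‖a q.1‖) * (W β q.2 * ‖b q.2‖) := by
      funext q
      simp only [shear1, Equiv.coe_fn_mk, Function.comp_apply, add_sub_cancel_left]
    rw [heq]
    exact hf
  exact (shear1 D).summable_iff.mp hcomp

lemma conv_aux (hβ : 0 ≤ β) (ha : WSummable β a) (hb : WSummable β b) :
    Summable fun q : (Fin D → ℤ) × (Fin D → ℤ) =>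
      W β q.2 * ‖a q.1 * b (q.2 - q.1)‖ := by
  rw [ws_def] at ha hb
  have hf2 : Summable fun q : (Fin D → ℤ) × (Fin D → ℤ) =>
      (W β q.1 * ‖a q.1‖) * (W β (q.2 - q.1) * ‖b (q.2 - q.1)‖) :=
    shear_summable ha hb
  apply Summable.of_nonneg_of_le _ _ hf2
  · intro q; exact mul_nonneg (W_pos _).le (norm_nonneg _)
  · intro q
    rw [norm_mul]
    calc W β q.2 * (‖a q.1‖ * ‖b (q.2 - q.1)‖)
        ≤ (W β q.1 * W β (q.2 - q.1)) * (‖a q.1‖ * ‖b (q.2 - q.1)‖) := by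
          apply mul_le_mul_of_nonneg_right (W_submul hβ _ _)
          positivity
      _ = (W β q.1 * ‖a q.1‖) * (W β (q.2 - q.1) * ‖b (q.2 - q.1)‖) := by ring

lemma conv_fiber_summable (hβ : 0 ≤ β) (ha : WSummable β a) (hb : WSummable β b)
    (m : Fin D → ℤ) : Summable fun k => W β m * ‖a k * b (m - k)‖ :=
  ((conv_aux hβ ha hb).prod_symm).prod_factor m

lemma conv_norm_summable (hβ : 0 ≤ β) (ha : WSummable β a) (hb : WSummable β b)
    (m : Fin D → ℤ) : Summable fun k => ‖a k * b (m - k)‖ := by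
  have h := conv_fiber_summable hβ ha hb m
  rwa [summable_mul_left_iff (ne_of_gt (W_pos (β := β) m))] at h

lemma conv_term_summable (hβ : 0 ≤ β) (ha : WSummable β a) (hb : WSummable β b)
    (m : Fin D → ℤ) : Summable fun k => a k * b (m - k) :=
  (conv_norm_summable hβ ha hb m).of_norm

lemma conv_fiber_sums_summable (hβ : 0 ≤ β) (ha : WSummable β a) (hb : WSummable β b) :
    Summable fun m => ∑' k, W β m * ‖a k * b (m - k)‖ :=
  ((conv_aux hβ ha hb).prod_symm.hasSum.prod_fiberwise
    (fun m => (conv_fiber_summable hβ ha hb m).hasSum)).summable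

lemma conv_pointwise_le (hβ : 0 ≤ β) (ha : WSummable β a) (hb : WSummable β b)
    (m : Fin D → ℤ) :
    W β m * ‖conv a b m‖ ≤ ∑' k, W β m * ‖a k * b (m - k)‖ := by
  rw [tsum_mul_left]
  apply mul_le_mul_of_nonneg_left _ (W_pos m).le
  exact norm_tsum_le_tsum_norm (conv_norm_summable hβ ha hb m)

lemma ws_conv (hβ : 0 ≤ β) (ha : WSummable β a) (hb : WSummable β b) :
    WSummable β (conv a b) := by
  rw [ws_def]
  exact Summable.of_nonneg_of_le (fun m => mul_nonneg (W_pos m).le (norm_nonneg _))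
    (conv_pointwise_le hβ ha hb) (conv_fiber_sums_summable hβ ha hb)

lemma wnorm_conv_le (hβ : 0 ≤ β) (ha : WSummable β a) (hb : WSummable β b) :
    wnorm β (conv a b) ≤ wnorm β a * wnorm β b := by
  have key := conv_aux hβ ha hb
  have ha' : Summable fun m => W β m * ‖a m‖ := ha
  have hb' : Summable fun m => W β m * ‖b m‖ := hb
  have hf : Summable fun q : (Fin D → ℤ) × (Fin D → ℤ) =>
      (W β q.1 * ‖a q.1‖) * (W β q.2 * ‖b q.2‖) :=
    Summable.mul_of_nonneg (f := fun m => W β m * ‖a m‖)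
      (g := fun m => W β m * ‖b m‖) ha' hb'
      (fun m => mul_nonneg (W_pos m).le (norm_nonneg _))
      (fun m => mul_nonneg (W_pos m).le (norm_nonneg _))
  have hf2 : Summable fun q : (Fin D → ℤ) × (Fin D → ℤ) =>
      (W β q.1 * ‖a q.1‖) * (W β (q.2 - q.1) * ‖b (q.2 - q.1)‖) :=
    shear_summable ha hb
  have hws := ws_conv hβ ha hb
  rw [ws_def] at hws
  calc wnorm β (conv a b)
      ≤ ∑' m, ∑' k, W β m * ‖a k * b (m - k)‖ := by
        rw [wnorm_eq]
        exact Summable.tsum_le_tsum (conv_pointwise_le hβ ha hb) hws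
          (conv_fiber_sums_summable hβ ha hb)
    _ = ∑' q : (Fin D → ℤ) × (Fin D → ℤ), W β q.2 * ‖a q.1 * b (q.2 - q.1)‖ := by
        rw [← (Equiv.prodComm (Fin D → ℤ) (Fin D → ℤ)).tsum_eq
          (fun q : (Fin D → ℤ) × (Fin D → ℤ) => W β q.2 * ‖a q.1 * b (q.2 - q.1)‖)]
        exact (Summable.tsum_prod' key.prod_symm
          (fun m => conv_fiber_summable hβ ha hb m)).symm
    _ ≤ ∑' q : (Fin D → ℤ) × (Fin D → ℤ),
          (W β q.1 * ‖a q.1‖) * (W β (q.2 - q.1) * ‖b (q.2 - q.1)‖) := by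
        apply Summable.tsum_le_tsum _ key hf2
        intro q
        rw [norm_mul]
        calc W β q.2 * (‖a q.1‖ * ‖b (q.2 - q.1)‖)
            ≤ (W β q.1 * W β (q.2 - q.1)) * (‖a q.1‖ * ‖b (q.2 - q.1)‖) :=
              mul_le_mul_of_nonneg_right (W_submul hβ _ _) (by positivity)
          _ = (W β q.1 * ‖a q.1‖) * (W β (q.2 - q.1) * ‖b (q.2 - q.1)‖) := by ring
    _ = ∑' q : (Fin D → ℤ) × (Fin D → ℤ),
          (W β q.1 * ‖a q.1‖) * (W β q.2 * ‖b q.2‖) := by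
        rw [← (shear1 D).tsum_eq (fun q : (Fin D → ℤ) × (Fin D → ℤ) =>
          (W β q.1 * ‖a q.1‖) * (W β (q.2 - q.1) * ‖b (q.2 - q.1)‖))]
        exact tsum_congr fun q => by simp only [shear1, Equiv.coe_fn_mk, add_sub_cancel_left]
    _ = wnorm β a * wnorm β b := by
        rw [wnorm_eq, wnorm_eq]
        calc ∑' q : (Fin D → ℤ) × (Fin D → ℤ),
              (W β q.1 * ‖a q.1‖) * (W β q.2 * ‖b q.2‖)
            = ∑' k, ∑' m, (W β k * ‖a k‖) * (W β m * ‖b m‖) :=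
              Summable.tsum_prod' (f := fun q : (Fin D → ℤ) × (Fin D → ℤ) =>
                (W β q.1 * ‖a q.1‖) * (W β q.2 * ‖b q.2‖)) hf
                (fun k => hb'.mul_left (W β k * ‖a k‖))
          _ = ∑' k, (W β k * ‖a k‖) * ∑' m, (W β m * ‖b m‖) :=
              tsum_congr fun k => tsum_mul_left
          _ = (∑' k, W β k * ‖a k‖) * ∑' m, (W β m * ‖b m‖) := tsum_mul_right

lemma conv_comm (a b : (Fin D → ℤ) → ℂ) : conv a b = conv b a := by
  funext m
  rw [conv, conv, ← (Equiv.subLeft m).tsum_eq (fun k => a k * b (m - k))]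
  exact tsum_congr fun k => by
    simp only [Equiv.subLeft_apply, sub_sub_cancel, mul_comm]

def delta (D : ℕ) : (Fin D → ℤ) → ℂ := fun m => if m = 0 then 1 else 0

lemma conv_delta (a : (Fin D → ℤ) → ℂ) : conv a (delta D) = a := by
  funext m
  rw [conv, tsum_eq_single m]
  · simp [delta]
  · intro k hk
    have : ¬(m - k = 0) := fun h => hk (by rw [sub_eq_zero] at h; exact h.symm)
    simp [delta, this]

lemma delta_conv (a : (Fin D → ℤ) → ℂ) : conv (delta D) a = a := by
  rw [conv_comm, conv_delta]

lemma conv_zero (a : (Fin D → ℤ) → ℂ) : conv a 0 = 0 := by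
  funext m; simp [conv]

lemma zero_conv (a : (Fin D → ℤ) → ℂ) : conv 0 a = 0 := by
  rw [conv_comm, conv_zero]

lemma conv_add_right (hβ : 0 ≤ β) (ha : WSummable β a) (hb : WSummable β b)
    {b' : (Fin D → ℤ) → ℂ} (hb' : WSummable β b') :
    conv a (b + b') = conv a b + conv a b' := by
  funext m
  have h1 := conv_term_summable hβ ha hb m
  have h2 := conv_term_summable hβ ha hb' m
  show ∑' k, a k * (b + b') (m - k) = conv a b m + conv a b' m
  calc ∑' k, a k * (b + b') (m - k)
      = ∑' k, (a k * b (m - k) + a k * b' (m - k)) :=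
        tsum_congr fun k => by simp [Pi.add_apply]; ring
    _ = conv a b m + conv a b' m := Summable.tsum_add h1 h2

lemma conv_neg_right (a b : (Fin D → ℤ) → ℂ) : conv a (-b) = -(conv a b) := by
  funext m
  show ∑' k, a k * (-b) (m - k) = -conv a b m
  rw [conv, ← tsum_neg]
  exact tsum_congr fun k => by simp

lemma conv_smul_right (z : ℂ) (a b : (Fin D → ℤ) → ℂ) :
    conv a (z • b) = z • conv a b := by
  funext m
  show ∑' k, a k * (z • b) (m - k) = z * conv a b m
  calc ∑' k, a k * (z • b) (m - k)
      = ∑' k, z * (a k * b (m - k)) := tsum_congr fun k => by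
        simp [Pi.smul_apply, smul_eq_mul]; ring
    _ = z * ∑' k, a k * b (m - k) := tsum_mul_left

/-- `(j, i) ↦ (i + j, j)`. -/
def shear2 (D : ℕ) : ((Fin D → ℤ) × (Fin D → ℤ)) ≃ ((Fin D → ℤ) × (Fin D → ℤ)) :=
  (shear1 D).trans (Equiv.prodComm _ _)

lemma shear2_apply (q : (Fin D → ℤ) × (Fin D → ℤ)) :
    shear2 D q = (q.1 + q.2, q.1) := rfl

lemma conv_assoc (hβ : 0 ≤ β) (ha : WSummable β a) (hb : WSummable β b)
    (hd : WSummable β d) :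
    conv (conv a b) d = conv a (conv b d) := by
  funext m
  have sa := summable_norm_of_ws hβ ha
  have sb := summable_norm_of_ws hβ hb
  -- the triple-sum kernel
  set H : ((Fin D → ℤ) × (Fin D → ℤ)) → ℂ :=
    fun q => a q.2 * b (q.1 - q.2) * d (m - q.1) with hHdef
  have hHn : Summable fun q => ‖H q‖ := by
    apply ((shear2 D).summable_iff (f := fun q => ‖H q‖)).mp
    have hprod : Summable fun q : (Fin D → ℤ) × (Fin D → ℤ) =>
        (‖a q.1‖ * ‖b q.2‖) * wnorm β d :=
      (Summable.mul_of_nonneg (f := fun k => ‖a k‖) (g := fun k => ‖b k‖)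
        sa sb (fun k => norm_nonneg _) (fun k => norm_nonneg _)).mul_right _
    apply Summable.of_nonneg_of_le (fun q => norm_nonneg _) _ hprod
    intro q
    have : H (shear2 D q) = a q.1 * b q.2 * d (m - (q.1 + q.2)) := by
      rw [shear2_apply, hHdef]
      simp only [add_sub_cancel_left]
    rw [this, norm_mul, norm_mul]
    exact mul_le_mul_of_nonneg_left (norm_le_wnorm hβ hd _)
      (mul_nonneg (norm_nonneg _) (norm_nonneg _))
  have hH : Summable H := hHn.of_norm
  have fib1 : ∀ k, Summable fun j => H (k, j) := fun k => hH.prod_factor k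
  have fib2 : ∀ j, Summable fun k => H (k, j) := fun j => hH.prod_symm.prod_factor j
  show ∑' k, conv a b k * d (m - k) = ∑' j, a j * conv b d (m - j)
  calc ∑' k, conv a b k * d (m - k)
      = ∑' k, ∑' j, H (k, j) := by
        refine tsum_congr fun k => ?_
        rw [conv, ← tsum_mul_right]
    _ = ∑' q : (Fin D → ℤ) × (Fin D → ℤ), H q :=
        (Summable.tsum_prod' (f := H) hH fib1).symm
    _ = ∑' q : (Fin D → ℤ) × (Fin D → ℤ), H (q.2, q.1) := by
        rw [← (Equiv.prodComm (Fin D → ℤ) (Fin D → ℤ)).tsum_eq H]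
        rfl
    _ = ∑' j, ∑' k, H (k, j) :=
        Summable.tsum_prod' (f := fun q => H (q.2, q.1)) hH.prod_symm
          (fun j => fib2 j)
    _ = ∑' j, a j * conv b d (m - j) := by
        refine tsum_congr fun j => ?_
        have : ∀ k, H (k, j) = a j * (b (k - j) * d (m - k)) := fun k => by
          rw [hHdef]; ring
        calc ∑' k, H (k, j) = ∑' k, a j * (b (k - j) * d (m - k)) :=
              tsum_congr fun k => this k
          _ = a j * ∑' k, b (k - j) * d (m - k) := tsum_mul_left
          _ = a j * conv b d (m - j) := by
              congr 1
              rw [conv, ← (Equiv.addRight j).tsum_eq (fun k => b (k - j) * d (m - k))]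
              refine tsum_congr fun i => ?_
              simp only [Equiv.coe_addRight, add_sub_cancel_right]
              congr 2
              abel

/-- The weighted Wiener algebra as a subtype. -/
def Wb (D : ℕ) (β : ℝ) : Type := {f : (Fin D → ℤ) → ℂ // WSummable β f}

namespace Wb

instance : Add (Wb D β) := ⟨fun x y => ⟨x.1 + y.1, ws_add x.2 y.2⟩⟩
instance : Neg (Wb D β) := ⟨fun x => ⟨-x.1, ws_neg x.2⟩⟩
instance : Zero (Wb D β) := ⟨⟨0, ws_zero⟩⟩
instance : One (Wb D β) := ⟨⟨delta D, ws_one⟩⟩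
instance [Fact (0 ≤ β)] : Mul (Wb D β) :=
  ⟨fun x y => ⟨conv x.1 y.1, ws_conv Fact.out x.2 y.2⟩⟩
instance : SMul ℂ (Wb D β) := ⟨fun z x => ⟨z • x.1, ws_smul z x.2⟩⟩

@[simp] lemma val_add (x y : Wb D β) : (x + y).1 = x.1 + y.1 := rfl
@[simp] lemma val_neg (x : Wb D β) : (-x).1 = -x.1 := rfl
@[simp] lemma val_zero : (0 : Wb D β).1 = 0 := rfl
@[simp] lemma val_one : (1 : Wb D β).1 = delta D := rfl
@[simp] lemma val_mul [Fact (0 ≤ β)] (x y : Wb D β) : (x * y).1 = conv x.1 y.1 := rfl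
@[simp] lemma val_smul (z : ℂ) (x : Wb D β) : (z • x).1 = z • x.1 := rfl

/-- Constructor helper keeping the type `Wb D β` syntactic. -/
def mkW (f : (Fin D → ℤ) → ℂ) (h : WSummable β f) : Wb D β := ⟨f, h⟩

@[simp] lemma val_mkW (f : (Fin D → ℤ) → ℂ) (h : WSummable β f) : (mkW f h).1 = f := rfl

instance [Fact (0 ≤ β)] : CommRing (Wb D β) where
  nsmul := nsmulRec
  zsmul := zsmulRec
  add_assoc x y z := Subtype.ext (add_assoc x.1 y.1 z.1)
  zero_add x := Subtype.ext (zero_add x.1)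
  add_zero x := Subtype.ext (add_zero x.1)
  add_comm x y := Subtype.ext (add_comm x.1 y.1)
  neg_add_cancel x := Subtype.ext (neg_add_cancel x.1)
  left_distrib x y z := Subtype.ext (conv_add_right Fact.out x.2 y.2 z.2)
  right_distrib x y z := Subtype.ext (by
    show conv (x.1 + y.1) z.1 = conv x.1 z.1 + conv y.1 z.1
    rw [conv_comm, conv_add_right Fact.out z.2 x.2 y.2, conv_comm z.1 x.1,
      conv_comm z.1 y.1])
  zero_mul x := Subtype.ext (zero_conv x.1)
  mul_zero x := Subtype.ext (conv_zero x.1)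
  mul_assoc x y z := Subtype.ext (conv_assoc Fact.out x.2 y.2 z.2)
  one_mul x := Subtype.ext (delta_conv x.1)
  mul_one x := Subtype.ext (conv_delta x.1)
  mul_comm x y := Subtype.ext (conv_comm x.1 y.1)

/-- The norm on the bundled algebra. -/
def N (x : Wb D β) : ℝ := wnorm β x.1

lemma N_nonneg (x : Wb D β) : 0 ≤ N x := wnorm_nonneg x.1

lemma N_add_le (x y : Wb D β) : N (x + y) ≤ N x + N y := wnorm_add_le x.2 y.2

lemma N_neg (x : Wb D β) : N (-x) = N x := wnorm_neg x.1

lemma N_mul_le [Fact (0 ≤ β)] (x y : Wb D β) : N (x * y) ≤ N x * N y :=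
  wnorm_conv_le Fact.out x.2 y.2

lemma N_one : N (1 : Wb D β) = 1 := wnorm_one

lemma N_zero : N (0 : Wb D β) = 0 := by
  show wnorm β 0 = 0
  rw [wnorm_eq]
  simp

lemma N_sub_le [Fact (0 ≤ β)] (x y : Wb D β) : N (x - y) ≤ N x + N y := by
  have : x - y = x + -y := sub_eq_add_neg x y
  rw [this]
  exact (N_add_le x (-y)).trans (by rw [N_neg])

lemma val_sub [Fact (0 ≤ β)] (x y : Wb D β) : (x - y).1 = x.1 - y.1 := by
  rw [sub_eq_add_neg, val_add, val_neg, sub_eq_add_neg]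

lemma N_pow_le [Fact (0 ≤ β)] (x : Wb D β) (n : ℕ) : N (x ^ n) ≤ N x ^ n := by
  induction n with
  | zero => simp [pow_zero, N_one]
  | succ n ih =>
      rw [pow_succ, pow_succ]
      calc N (x ^ n * x) ≤ N (x ^ n) * N x := N_mul_le _ _
        _ ≤ N x ^ n * N x :=
          mul_le_mul_of_nonneg_right ih (N_nonneg x)

lemma N_sum_le [Fact (0 ≤ β)] {ι : Type} (s : Finset ι) (f : ι → Wb D β) :
    N (∑ i ∈ s, f i) ≤ ∑ i ∈ s, N (f i) := by
  classical
  refine Finset.induction_on s ?_ ?_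
  · simp [N_zero]
  · intro i s' hnot ih
    rw [Finset.sum_insert hnot, Finset.sum_insert hnot]
    exact (N_add_le _ _).trans (add_le_add_right ih _)

lemma N_nsmul_le [Fact (0 ≤ β)] (n : ℕ) (x : Wb D β) : N (n • x) ≤ n * N x := by
  induction n with
  | zero => simp [zero_nsmul, N_zero]
  | succ n ih =>
      rw [succ_nsmul]
      calc N (n • x + x) ≤ N (n • x) + N x := N_add_le _ _
        _ ≤ n * N x + N x := add_le_add_left ih _
        _ = (n + 1 : ℕ) * N x := by push_cast; ring

lemma N_smulC (z : ℂ) (x : Wb D β) : N (z • x) = ‖z‖ * N x := wnorm_smul z x.1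

lemma val_pow [Fact (0 ≤ β)] (x : Wb D β) (n : ℕ) :
    (x ^ n).1 = convPow x.1 n := by
  induction n with
  | zero => rw [pow_zero]; rfl
  | succ n ih =>
      rw [pow_succ, val_mul, ih]
      rfl

lemma val_nsmul [Fact (0 ≤ β)] (n : ℕ) (x : Wb D β) (m : Fin D → ℤ) :
    (n • x).1 m = (n : ℂ) * x.1 m := by
  induction n with
  | zero => rw [zero_nsmul]; simp [val_zero]
  | succ n ih =>
      rw [succ_nsmul, val_add, Pi.add_apply, ih]
      push_cast
      ring

/-- Constant for the quadratic remainder bound. -/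
def KK (p : ℕ) (x : ℝ) : ℝ :=
  (p:ℝ) * ((p:ℝ) * ((x*x+2*x+2)^p * (2*x+1)) * ((x*x+2*x+2)^p * (2*x+1))
      + (x*x+2*x+2)^p) * x
    + (p:ℝ) * ((x*x+2*x+2)^p * (2*x+1))

lemma remainder_bound [Fact (0 ≤ β)] {p : ℕ} (hp : 1 ≤ p) (Cb Tb Vb Tv : Wb D β)
    (hct : N Tb = N Cb) (hwt : N Tv = N Vb) (hw1 : N Vb ≤ 1) :
    N (((Cb+Vb)*(Tb+Tv))^p * (Cb+Vb) - (Cb*Tb)^p * Cb -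
        ((p+1) • ((Cb*Tb)^p * Vb) + p • ((Cb*Tb)^(p-1) * Cb * Cb * Tv)))
      ≤ KK p (N Cb) * (N Vb * N Vb) := by
  obtain ⟨q, rfl⟩ : ∃ q, p = q + 1 := ⟨p - 1, by omega⟩
  simp only [Nat.add_sub_cancel]
  set nc := N Cb with hncdef
  set nv := N Vb with hnvdef
  have hnc : 0 ≤ nc := N_nonneg Cb
  have hnv : 0 ≤ nv := N_nonneg Vb
  set A := Cb * Tb with hAdef
  set BB := (Cb + Vb) * (Tb + Tv) with hBdef
  set E1 := Cb * Tv + Vb * Tb with hE1def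
  set E2 := Vb * Tv with hE2def
  set E := E1 + E2 with hEdef
  have hiden : BB^(q+1) * (Cb+Vb) - A^(q+1) * Cb -
      ((q+1+1) • (A^(q+1) * Vb) + (q+1) • (A^q * Cb * Cb * Tv))
      = (BB^(q+1) - A^(q+1) - (q+1) • (A^q * E1)) * Cb + (BB^(q+1) - A^(q+1)) * Vb := by
    rw [hAdef, hBdef, hE1def]
    simp only [nsmul_eq_mul, Nat.cast_add, Nat.cast_one]
    ring
  have hE : BB - A = E := by
    rw [hAdef, hBdef, hEdef, hE1def, hE2def]; ring
  have htele : ∀ i : ℕ, BB^i - A^i = (∑ j ∈ Finset.range i, BB^j * A^(i-1-j)) * E := by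
    intro i
    rw [← hE]
    exact (geom_sum₂_mul BB A i).symm
  -- norm bounds
  set T0 : ℝ := nc*nc + 2*nc + 2 with hT0def
  have hT0nonneg : (0:ℝ) ≤ T0 := by rw [hT0def]; nlinarith
  have hT0one : (1:ℝ) ≤ T0 := by rw [hT0def]; nlinarith
  set u : ℝ := T0 ^ (q+1) with hudef
  have hu : (0:ℝ) ≤ u := pow_nonneg hT0nonneg _
  set P : ℝ := ((q:ℝ) + 1) with hPdef
  have hP : (0:ℝ) ≤ P := by rw [hPdef]; positivity
  have hNE1 : N E1 ≤ 2 * nc * nv := by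
    calc N E1 ≤ N (Cb * Tv) + N (Vb * Tb) := N_add_le _ _
      _ ≤ N Cb * N Tv + N Vb * N Tb :=
          add_le_add (N_mul_le _ _) (N_mul_le _ _)
      _ = 2 * nc * nv := by rw [hct, hwt, ← hncdef, ← hnvdef]; ring
  have hNE2 : N E2 ≤ nv * nv := by
    calc N E2 ≤ N Vb * N Tv := N_mul_le _ _
      _ = nv * nv := by rw [hwt, ← hnvdef]
  have hNE : N E ≤ (2*nc+1) * nv := by
    calc N E ≤ N E1 + N E2 := N_add_le _ _
      _ ≤ 2 * nc * nv + nv * nv := add_le_add hNE1 hNE2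
      _ ≤ 2 * nc * nv + 1 * nv := by nlinarith
      _ = (2*nc+1) * nv := by ring
  have hNEnn : 0 ≤ N E := N_nonneg E
  have hNE2nn : 0 ≤ N E2 := N_nonneg E2
  have hNA : N A ≤ T0 := by
    calc N A ≤ N Cb * N Tb := N_mul_le _ _
      _ = nc * nc := by rw [hct, ← hncdef]
      _ ≤ T0 := by rw [hT0def]; nlinarith
  have hNBB : N BB ≤ T0 := by
    have hBAE : BB = A + E := by rw [← hE]; ring
    calc N BB = N (A + E) := by rw [hBAE]
      _ ≤ N A + N E := N_add_le _ _
      _ ≤ (nc * nc) + (2*nc+1) * nv := by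
          refine add_le_add ?_ hNE
          calc N A ≤ N Cb * N Tb := N_mul_le _ _
            _ = nc * nc := by rw [hct, ← hncdef]
      _ ≤ T0 := by rw [hT0def]; nlinarith
  have hmix : ∀ i j : ℕ, i + j ≤ q + 1 → N (BB ^ i * A ^ j) ≤ u := by
    intro i j hij
    calc N (BB ^ i * A ^ j) ≤ N (BB ^ i) * N (A ^ j) := N_mul_le _ _
      _ ≤ N BB ^ i * N A ^ j :=
          mul_le_mul (N_pow_le _ _) (N_pow_le _ _) (N_nonneg _)
            (pow_nonneg (N_nonneg _) _)
      _ ≤ T0 ^ i * T0 ^ j :=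
          mul_le_mul (pow_le_pow_left₀ (N_nonneg _) hNBB i)
            (pow_le_pow_left₀ (N_nonneg _) hNA j)
            (pow_nonneg (N_nonneg _) _) (pow_nonneg hT0nonneg _)
      _ = T0 ^ (i + j) := (pow_add T0 i j).symm
      _ ≤ u := by
          rw [hudef]
          exact pow_le_pow_right₀ hT0one hij
  have hdiff : ∀ i : ℕ, i ≤ q + 1 → N (BB ^ i - A ^ i) ≤ P * u * N E := by
    intro i hi
    rw [htele i]
    calc N ((∑ j ∈ Finset.range i, BB^j * A^(i-1-j)) * E)
        ≤ N (∑ j ∈ Finset.range i, BB^j * A^(i-1-j)) * N E := N_mul_le _ _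
      _ ≤ (∑ j ∈ Finset.range i, N (BB^j * A^(i-1-j))) * N E :=
          mul_le_mul_of_nonneg_right (N_sum_le _ _) hNEnn
      _ ≤ (∑ _j ∈ Finset.range i, u) * N E := by
          refine mul_le_mul_of_nonneg_right ?_ hNEnn
          refine Finset.sum_le_sum fun j hj => ?_
          refine hmix j (i-1-j) ?_
          have := Finset.mem_range.mp hj
          omega
      _ = (i : ℝ) * u * N E := by
          rw [Finset.sum_const, Finset.card_range, nsmul_eq_mul]
      _ ≤ P * u * N E := by
          refine mul_le_mul_of_nonneg_right
            (mul_le_mul_of_nonneg_right ?_ hu) hNEnn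
          rw [hPdef]
          exact_mod_cast Nat.cast_le.mpr hi
  have htermb : ∀ i ∈ Finset.range (q+1),
      N (BB^i * A^(q-i) * E - A^q * E1)
        ≤ P * (u * N E) * (u * N E) + u * N E2 := by
    intro i hi
    have hir := Finset.mem_range.mp hi
    have hpow : A^i * A^(q-i) = A^q := by
      rw [← pow_add]; congr 1; omega
    have hEsplit : E - E1 = E2 := by rw [hEdef]; ring
    have heq : BB^i * A^(q-i) * E - A^q * E1
        = (BB^i - A^i) * (A^(q-i) * E) + A^q * E2 := by
      linear_combination E * hpow + A^q * hEsplit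
    rw [heq]
    have h1 : N ((BB^i - A^i) * (A^(q-i) * E)) ≤ P * (u * N E) * (u * N E) := by
      calc N ((BB^i - A^i) * (A^(q-i) * E))
          ≤ N (BB^i - A^i) * N (A^(q-i) * E) := N_mul_le _ _
        _ ≤ (P * u * N E) * (u * N E) := by
            refine mul_le_mul (hdiff i (by omega)) ?_ (N_nonneg _) ?_
            · calc N (A^(q-i) * E) ≤ N (A^(q-i)) * N E := N_mul_le _ _
                _ ≤ u * N E := by
                    refine mul_le_mul_of_nonneg_right ?_ hNEnn
                    have := hmix 0 (q-i) (by omega)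
                    simpa [pow_zero, one_mul] using this
            · positivity
        _ = P * (u * N E) * (u * N E) := by ring
    have h2 : N (A^q * E2) ≤ u * N E2 := by
      calc N (A^q * E2) ≤ N (A^q) * N E2 := N_mul_le _ _
        _ ≤ u * N E2 := by
            refine mul_le_mul_of_nonneg_right ?_ hNE2nn
            have := hmix 0 q (by omega)
            simpa [pow_zero, one_mul] using this
    calc N ((BB^i - A^i) * (A^(q-i) * E) + A^q * E2)
        ≤ N ((BB^i - A^i) * (A^(q-i) * E)) + N (A^q * E2) := N_add_le _ _
      _ ≤ P * (u * N E) * (u * N E) + u * N E2 := add_le_add h1 h2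
  have hGsum : BB^(q+1) - A^(q+1) - (q+1) • (A^q * E1)
      = ∑ i ∈ Finset.range (q+1), (BB^i * A^(q-i) * E - A^q * E1) := by
    have ht1 : BB^(q+1) - A^(q+1) = (∑ j ∈ Finset.range (q+1), BB^j * A^(q-j)) * E := by
      rw [← hE]
      have h2 := (geom_sum₂_mul BB A (q+1)).symm
      simpa only [Nat.add_sub_cancel] using h2
    rw [Finset.sum_sub_distrib, ← Finset.sum_mul, Finset.sum_const, Finset.card_range, ht1]
  have hG : N (BB^(q+1) - A^(q+1) - (q+1) • (A^q * E1))
      ≤ P * (P * (u * N E) * (u * N E) + u * N E2) := by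
    rw [hGsum]
    calc N (∑ i ∈ Finset.range (q+1), (BB^i * A^(q-i) * E - A^q * E1))
        ≤ ∑ i ∈ Finset.range (q+1), N (BB^i * A^(q-i) * E - A^q * E1) := N_sum_le _ _
      _ ≤ ∑ _i ∈ Finset.range (q+1), (P * (u * N E) * (u * N E) + u * N E2) :=
          Finset.sum_le_sum htermb
      _ = P * (P * (u * N E) * (u * N E) + u * N E2) := by
          rw [Finset.sum_const, Finset.card_range, nsmul_eq_mul, hPdef]
          push_cast
          ring
  -- assemble
  rw [hiden]
  have hfin : N ((BB^(q+1) - A^(q+1) - (q+1) • (A^q * E1)) * Cb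
        + (BB^(q+1) - A^(q+1)) * Vb)
      ≤ (P * (P * (u * N E) * (u * N E) + u * N E2)) * nc + (P * (u * N E)) * nv := by
    calc N ((BB^(q+1) - A^(q+1) - (q+1) • (A^q * E1)) * Cb
          + (BB^(q+1) - A^(q+1)) * Vb)
        ≤ N ((BB^(q+1) - A^(q+1) - (q+1) • (A^q * E1)) * Cb)
          + N ((BB^(q+1) - A^(q+1)) * Vb) := N_add_le _ _
      _ ≤ N (BB^(q+1) - A^(q+1) - (q+1) • (A^q * E1)) * nc
          + N (BB^(q+1) - A^(q+1)) * nv :=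
          add_le_add (N_mul_le _ _) (N_mul_le _ _)
      _ ≤ (P * (P * (u * N E) * (u * N E) + u * N E2)) * nc + (P * (u * N E)) * nv := by
          refine add_le_add (mul_le_mul_of_nonneg_right hG hnc) ?_
          refine mul_le_mul_of_nonneg_right ?_ hnv
          have := hdiff (q+1) le_rfl
          calc N (BB^(q+1) - A^(q+1)) ≤ P * u * N E := this
            _ = P * (u * N E) := by ring
  refine hfin.trans ?_
  -- replace N E and N E2 by their bounds
  have h1 : u * N E ≤ u * ((2*nc+1)*nv) := mul_le_mul_of_nonneg_left hNE hu
  have hxnn : (0:ℝ) ≤ (2*nc+1)*nv := by positivity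
  have h2 : P * (u * N E) ≤ P * (u * ((2*nc+1)*nv)) := mul_le_mul_of_nonneg_left h1 hP
  have h3 : P * (u * N E) * (u * N E) ≤ P * (u * ((2*nc+1)*nv)) * (u * ((2*nc+1)*nv)) :=
    mul_le_mul h2 h1 (mul_nonneg hu hNEnn) (by positivity)
  have h4 : u * N E2 ≤ u * (nv * nv) := mul_le_mul_of_nonneg_left hNE2 hu
  have h5 : P * (P * (u * N E) * (u * N E) + u * N E2)
      ≤ P * (P * (u * ((2*nc+1)*nv)) * (u * ((2*nc+1)*nv)) + u * (nv*nv)) :=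
    mul_le_mul_of_nonneg_left (add_le_add h3 h4) hP
  have h6 := add_le_add (mul_le_mul_of_nonneg_right h5 hnc)
    (mul_le_mul_of_nonneg_right h2 hnv)
  refine h6.trans (le_of_eq ?_)
  rw [KK, hudef, hT0def, hPdef]
  push_cast
  ring

end Wb

end Stmt5Aux

/-- The nonlinear map `Φ(c) = (c ⋆ c̃)^{⋆p} ⋆ c`. -/
def Phi {D : ℕ} (p : ℕ) (c : (Fin D → ℤ) → ℂ) : (Fin D → ℤ) → ℂ :=
  conv (convPow (conv c (tilde c)) p) c

/-- The claimed real derivative of `Φ` at `c`: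
`w ↦ (p+1) (c ⋆ c̃)^{⋆p} ⋆ w + p (c ⋆ c̃)^{⋆(p−1)} ⋆ c ⋆ c ⋆ w̃`. -/
def Lder {D : ℕ} (p : ℕ) (c w : (Fin D → ℤ) → ℂ) : (Fin D → ℤ) → ℂ :=
  fun m => ((p : ℂ) + 1) * conv (convPow (conv c (tilde c)) p) w m
    + (p : ℂ) * conv (conv (conv (convPow (conv c (tilde c)) (p - 1)) c) c) (tilde w) m

open Stmt5Aux Stmt5Aux.Wb in
/-- `Φ(c) = (c ⋆ c̃)^{⋆p} ⋆ c` is Fréchet differentiable (over `ℝ`) on the weighted Wiener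
algebra, with derivative `w ↦ (p+1)(c ⋆ c̃)^{⋆p} ⋆ w + p (c ⋆ c̃)^{⋆(p−1)} ⋆ c ⋆ c ⋆ w̃`:
the derivative is `ℝ`-linear and bounded, and the first-order Taylor remainder is `o(‖w‖_β)`. -/
theorem stmt5 (D p : ℕ) (hD : 1 ≤ D) (hp : 1 ≤ p) (β : ℝ) (hβ : 0 ≤ β)
    (c : (Fin D → ℤ) → ℂ) (hc : WSummable β c) :
    (∀ w w' : (Fin D → ℤ) → ℂ, WSummable β w → WSummable β w' →
        Lder p c (w + w') = Lder p c w + Lder p c w') ∧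
    (∀ (r : ℝ) (w : (Fin D → ℤ) → ℂ), WSummable β w →
        Lder p c (r • w) = r • Lder p c w) ∧
    (∃ C : ℝ, 0 ≤ C ∧ ∀ w : (Fin D → ℤ) → ℂ, WSummable β w →
        WSummable β (Lder p c w) ∧ wnorm β (Lder p c w) ≤ C * wnorm β w) ∧
    (∀ ε : ℝ, 0 < ε → ∃ η : ℝ, 0 < η ∧ ∀ w : (Fin D → ℤ) → ℂ,
        WSummable β w → wnorm β w ≤ η →
        WSummable β (Phi p (c + w) - Phi p c - Lder p c w) ∧
        wnorm β (Phi p (c + w) - Phi p c - Lder p c w) ≤ ε * wnorm β w) := by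
  haveI : Fact (0 ≤ β) := ⟨hβ⟩
  set Cb : Wb D β := mkW c hc with hCbdef
  set Ct : Wb D β := mkW (tilde c) (ws_tilde hc) with hCtdef
  have Lval : ∀ (w : (Fin D → ℤ) → ℂ) (hw : WSummable β w),
      Lder p c w = ((p+1) • ((Cb * Ct)^p * mkW w hw)
        + p • (((Cb * Ct)^(p-1) * Cb * Cb)
          * mkW (tilde w) (ws_tilde hw))).1 := by
    intro w hw
    funext m
    have e1 : convPow (conv c (tilde c)) p = ((Cb * Ct)^p).1 := (val_pow (Cb * Ct) p).symm
    have e2 : convPow (conv c (tilde c)) (p-1) = ((Cb * Ct)^(p-1)).1 :=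
      (val_pow (Cb * Ct) (p-1)).symm
    show ((p:ℂ)+1) * conv (convPow (conv c (tilde c)) p) w m
        + (p:ℂ) * conv (conv (conv (convPow (conv c (tilde c)) (p-1)) c) c) (tilde w) m = _
    rw [e1, e2, val_add, Pi.add_apply, val_nsmul, val_nsmul]
    push_cast
    rfl
  refine ⟨?_, ?_, ?_, ?_⟩
  · -- additivity
    intro w w' hw hw'
    rw [Lval w hw, Lval w' hw', Lval (w+w') (ws_add hw hw')]
    have h1 : mkW (w + w') (ws_add hw hw') = mkW w hw + mkW w' hw' :=
      Subtype.ext rfl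
    have h2 : mkW (tilde (w + w')) (ws_tilde (ws_add hw hw'))
        = mkW (tilde w) (ws_tilde hw) + mkW (tilde w') (ws_tilde hw') :=
      Subtype.ext (tilde_add w w')
    rw [h1, h2, ← val_add]
    congr 1
    simp only [nsmul_eq_mul]
    simp only [mul_add]; abel
  · -- real homogeneity
    intro r w hw
    have ht : tilde (r • w) = r • tilde w := by
      funext x
      simp [tilde, Complex.real_smul, map_mul, Complex.conj_ofReal]
    have hs : ∀ (K v : (Fin D → ℤ) → ℂ) (m : Fin D → ℤ),
        conv K (r • v) m = (r:ℂ) * conv K v m := by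
      intro K v m
      rw [conv, conv, ← tsum_mul_left]
      refine tsum_congr fun k => ?_
      simp only [Pi.smul_apply, Complex.real_smul]
      ring
    funext m
    have hR : (r • Lder p c w) m
        = (r:ℂ) * (((p:ℂ)+1) * conv (convPow (conv c (tilde c)) p) w m
          + (p:ℂ) * conv (conv (conv (convPow (conv c (tilde c)) (p-1)) c) c)
              (tilde w) m) := by
      simp only [Pi.smul_apply, Complex.real_smul, Lder]
    rw [hR]
    show ((p:ℂ)+1) * conv (convPow (conv c (tilde c)) p) (r • w) m
        + (p:ℂ) * conv (conv (conv (convPow (conv c (tilde c)) (p-1)) c) c)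
            (tilde (r • w)) m = _
    rw [ht, hs, hs]
    ring
  · -- boundedness
    refine ⟨((p:ℝ)+1) * N ((Cb * Ct)^p)
        + (p:ℝ) * N ((Cb * Ct)^(p-1) * Cb * Cb), ?_, ?_⟩
    · have h1 := N_nonneg ((Cb * Ct)^p)
      have h2 := N_nonneg ((Cb * Ct)^(p-1) * Cb * Cb)
      have hp0 : (0:ℝ) ≤ (p:ℝ) := Nat.cast_nonneg p
      nlinarith
    · intro w hw
      refine ⟨by rw [Lval w hw]; exact Subtype.property _, ?_⟩
      rw [Lval w hw]
      have hwt : N (mkW (tilde w) (ws_tilde hw)) = N (mkW w hw) :=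
        wnorm_tilde w
      have hnwnn : 0 ≤ N (mkW w hw) := N_nonneg _
      calc N ((p+1) • ((Cb * Ct)^p * mkW w hw)
            + p • (((Cb * Ct)^(p-1) * Cb * Cb) * mkW (tilde w) (ws_tilde hw)))
          ≤ N ((p+1) • ((Cb * Ct)^p * mkW w hw))
            + N (p • (((Cb * Ct)^(p-1) * Cb * Cb)
              * mkW (tilde w) (ws_tilde hw))) := N_add_le _ _
        _ ≤ ((p+1 : ℕ):ℝ) * N ((Cb * Ct)^p * mkW w hw)
            + ((p:ℕ):ℝ) * N (((Cb * Ct)^(p-1) * Cb * Cb)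
              * mkW (tilde w) (ws_tilde hw)) :=
            add_le_add (N_nsmul_le _ _) (N_nsmul_le _ _)
        _ ≤ ((p+1 : ℕ):ℝ) * (N ((Cb * Ct)^p) * N (mkW w hw))
            + ((p:ℕ):ℝ) * (N ((Cb * Ct)^(p-1) * Cb * Cb)
              * N (mkW (tilde w) (ws_tilde hw))) :=
            add_le_add
              (mul_le_mul_of_nonneg_left (N_mul_le _ _) (by positivity))
              (mul_le_mul_of_nonneg_left (N_mul_le _ _) (by positivity))
        _ = (((p:ℝ)+1) * N ((Cb * Ct)^p)
            + (p:ℝ) * N ((Cb * Ct)^(p-1) * Cb * Cb)) * N (mkW w hw) := by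
            rw [hwt]; push_cast; ring
  · -- tangency (remainder)
    intro ε hε
    set K : ℝ := KK p (wnorm β c) with hKdef
    refine ⟨min 1 (ε / (|K| + 1)), lt_min one_pos (div_pos hε (by positivity)), ?_⟩
    intro w hw hwη
    have hw1 : wnorm β w ≤ 1 := hwη.trans (min_le_left _ _)
    have hwε : wnorm β w ≤ ε / (|K| + 1) := hwη.trans (min_le_right _ _)
    have hnw : 0 ≤ wnorm β w := wnorm_nonneg w
    set Wv : Wb D β := mkW w hw with hWvdef
    set Wt : Wb D β := mkW (tilde w) (ws_tilde hw) with hWtdef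
    have h0 : conv (c+w) (tilde (c+w)) = ((Cb + Wv) * (Ct + Wt)).1 := by
      rw [tilde_add]; rfl
    have e3 : convPow (((Cb + Wv) * (Ct + Wt)).1) p
        = (((Cb + Wv) * (Ct + Wt))^p).1 := (val_pow ((Cb + Wv) * (Ct + Wt)) p).symm
    have e1 : convPow (conv c (tilde c)) p = ((Cb * Ct)^p).1 := (val_pow (Cb * Ct) p).symm
    have hPhi1 : Phi p (c+w) = ((((Cb + Wv) * (Ct + Wt))^p) * (Cb + Wv)).1 := by
      show conv (convPow (conv (c+w) (tilde (c+w))) p) (c+w) = _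
      rw [h0, e3]
      rfl
    have hPhi2 : Phi p c = (((Cb * Ct)^p) * Cb).1 := by
      show conv (convPow (conv c (tilde c)) p) c = _
      rw [e1]
      rfl
    have hRem : Phi p (c+w) - Phi p c - Lder p c w
        = ((((Cb + Wv) * (Ct + Wt))^p * (Cb + Wv))
          - ((Cb * Ct)^p * Cb)
          - ((p+1) • ((Cb * Ct)^p * Wv)
            + p • (((Cb * Ct)^(p-1) * Cb * Cb) * Wt))).1 := by
      rw [hPhi1, hPhi2, Lval w hw, ← val_sub, ← val_sub]
    rw [hRem]
    refine ⟨Subtype.property _, ?_⟩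
    have hb := remainder_bound hp Cb Ct Wv Wt (wnorm_tilde c) (wnorm_tilde w) hw1
    have hbb : N ((((Cb + Wv) * (Ct + Wt))^p * (Cb + Wv))
          - ((Cb * Ct)^p * Cb)
          - ((p+1) • ((Cb * Ct)^p * Wv)
            + p • (((Cb * Ct)^(p-1) * Cb * Cb) * Wt)))
        ≤ K * (wnorm β w * wnorm β w) := by
      have heq : ((Cb * Ct)^(p-1) * Cb * Cb) * Wt = (Cb * Ct)^(p-1) * Cb * Cb * Wt := by
        ring
      rw [heq]
      exact hb
    have step1 : K * (wnorm β w * wnorm β w)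
        ≤ (|K| + 1) * (wnorm β w * wnorm β w) :=
      mul_le_mul_of_nonneg_right ((le_abs_self K).trans (by linarith [abs_nonneg K]))
        (mul_nonneg hnw hnw)
    have step2 : (|K| + 1) * wnorm β w ≤ ε := by
      have h := mul_le_mul_of_nonneg_left hwε (by positivity : (0:ℝ) ≤ |K| + 1)
      calc (|K| + 1) * wnorm β w ≤ (|K| + 1) * (ε / (|K| + 1)) := h
        _ = ε := by field_simp
    calc wnorm β _ ≤ K * (wnorm β w * wnorm β w) := hbb
      _ ≤ (|K| + 1) * (wnorm β w * wnorm β w) := step1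
      _ = ((|K| + 1) * wnorm β w) * wnorm β w := by ring
      _ ≤ ε * wnorm β w := mul_le_mul_of_nonneg_right step2 hnw
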